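/- Let N be a finite index set with values x : N → ℝ, let G ⊆ N with |N \ G| ≤ b, let j ∉ N be an additional index with value x_j ∈ ℝ, and assume |N| ≥ 2b + 1. Let B⁻ ⊆ N be a set of b indices carrying the b smallest values, B⁺ ⊆ N \ B⁻ a set of b indices carrying the b largest values among N \ B⁻, and T = N \ B⁻ \ B⁺. Then there exist weights y : (N ∪ {j}) → ℝ with y_i ≥ 0 for all i, y_i = 0 for every i ∉ G ∪ {j}, Σᵢ y_i = 1, and y_j = 1/(|N| − 2b + 1), such that (1/(|N| − 2b + 1))·(x_j + Σ_{i∈T} x(i)) = Σᵢ y_i · x_i (with x_i = x(i) for i ∈ N). -/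

import Mathlib

/-- BRIDGE matrix-form representation lemma: the trimmed-mean update at a node `j`
(averaging its own value together with the trimmed set `T` of neighbor values) can be
written as a convex combination of the values at nonfaulty indices and the node's own
value only, with the node's own weight equal to `1/(|N| - 2b + 1)`. -/
theorem bridge_trimmed_mean_convex_combination
    {ι : Type*} [DecidableEq ι] (b : ℕ) (N G Bminus Bplus T : Finset ι) (x : ι → ℝ)
    (j : ι) (hj : j ∉ N)
    (hG : G ⊆ N) (hfaulty : (N \ G).card ≤ b)
    (hN : 2 * b + 1 ≤ N.card)
    (hBm : Bminus ⊆ N) (hBmcard : Bminus.card = b)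
    (hBmmin : ∀ m ∈ Bminus, ∀ i ∈ N \ Bminus, x m ≤ x i)
    (hBp : Bplus ⊆ N \ Bminus) (hBpcard : Bplus.card = b)
    (hBpmax : ∀ m ∈ Bplus, ∀ i ∈ (N \ Bminus) \ Bplus, x i ≤ x m)
    (hT : T = (N \ Bminus) \ Bplus) :
    ∃ y : ι → ℝ,
      (∀ i ∈ insert j N, 0 ≤ y i) ∧
      (∀ i ∈ insert j N, i ∉ G ∪ {j} → y i = 0) ∧
      (∑ i ∈ insert j N, y i = 1) ∧
      y j = 1 / ((N.card : ℝ) - 2 * b + 1) ∧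
      (1 / ((N.card : ℝ) - 2 * b + 1)) * (x j + ∑ i ∈ T, x i)
        = ∑ i ∈ insert j N, y i * x i := by
  classical
  set F : Finset ι := T \ G with hF
  -- key existence of honest representatives m ∈ Bminus ∩ G, p ∈ Bplus ∩ G when F ≠ ∅
  have hTsubN : T ⊆ N := by
    rw [hT]; intro i hi
    simp only [Finset.mem_sdiff] at hi; exact hi.1.1
  obtain ⟨m, p, lam, hlam, hmN, hpN, hmG, hpG, hmT, hpT, hne⟩ :
      ∃ (m p : ι) (lam : ι → ℝ),
        (∀ k ∈ F, 0 ≤ lam k ∧ lam k ≤ 1 ∧ lam k * x m + (1 - lam k) * x p = x k) ∧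
        m ∈ insert j N ∧ p ∈ insert j N ∧ m ∈ G ∪ {j} ∧ p ∈ G ∪ {j} ∧
        m ∉ T ∩ G ∧ p ∉ T ∩ G ∧ (F.Nonempty → m ≠ j ∧ p ≠ j) := by
    rcases F.eq_empty_or_nonempty with hFe | hFne
    · exact ⟨j, j, fun _ => 0, by simp [hFe], by simp, by simp, by simp, by simp,
        by simp [Finset.mem_inter]; intro h; exact fun _ => hj (hTsubN h),
        by simp [Finset.mem_inter]; intro h; exact fun _ => hj (hTsubN h),
        by intro h; rw [hFe] at h; exact absurd h (by simp)⟩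
    · obtain ⟨k₀, hk₀⟩ := hFne
      have hk₀N : k₀ ∈ N := hTsubN (Finset.mem_sdiff.mp hk₀).1
      have hk₀G : k₀ ∉ G := (Finset.mem_sdiff.mp hk₀).2
      have hk₀T : k₀ ∈ T := (Finset.mem_sdiff.mp hk₀).1
      have hk₀f : k₀ ∈ N \ G := Finset.mem_sdiff.mpr ⟨hk₀N, hk₀G⟩
      -- find honest m in Bminus
      have hmex : ∃ m, m ∈ Bminus ∧ m ∈ G := by
        by_contra h
        push_neg at h
        have hsub : Bminus ⊆ (N \ G) \ {k₀} := by
          intro i hi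
          have hiT : i ∉ T := by
            rw [hT]; simp [Finset.mem_sdiff, hi]
          refine Finset.mem_sdiff.mpr ⟨Finset.mem_sdiff.mpr ⟨hBm hi, h i hi⟩, ?_⟩
          simp only [Finset.mem_singleton]
          rintro rfl; exact hiT hk₀T
        have := Finset.card_le_card hsub
        rw [hBmcard] at this
        have h2 : ((N \ G) \ {k₀}).card < (N \ G).card :=
          Finset.card_lt_card (Finset.sdiff_ssubset (by simpa using hk₀f) (by simp))
        omega
      have hpex : ∃ p, p ∈ Bplus ∧ p ∈ G := by
        by_contra h
        push_neg at h
        have hsub : Bplus ⊆ (N \ G) \ {k₀} := by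
          intro i hi
          have hiT : i ∉ T := by
            rw [hT]; simp [Finset.mem_sdiff, hi]
          refine Finset.mem_sdiff.mpr ⟨Finset.mem_sdiff.mpr ⟨(Finset.mem_sdiff.mp (hBp hi)).1, h i hi⟩, ?_⟩
          simp only [Finset.mem_singleton]
          rintro rfl; exact hiT hk₀T
        have := Finset.card_le_card hsub
        rw [hBpcard] at this
        have h2 : ((N \ G) \ {k₀}).card < (N \ G).card :=
          Finset.card_lt_card (Finset.sdiff_ssubset (by simpa using hk₀f) (by simp))
        omega
      obtain ⟨m, hmB, hmG⟩ := hmex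
      obtain ⟨p, hpB, hpG⟩ := hpex
      have hmN : m ∈ N := hBm hmB
      have hpN : p ∈ N := (Finset.mem_sdiff.mp (hBp hpB)).1
      refine ⟨m, p, fun k => if x p = x m then 1 else (x p - x k) / (x p - x m),
        ?_, by simp [hmN], by simp [hpN], by simp [hmG], by simp [hpG],
        ?_, ?_, fun _ => ⟨fun h => hj (h ▸ hmN), fun h => hj (h ▸ hpN)⟩⟩
      · intro k hk
        have hkT : k ∈ T := (Finset.mem_sdiff.mp hk).1
        have hkT' : k ∈ (N \ Bminus) \ Bplus := hT ▸ hkT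
        have hmk : x m ≤ x k := hBmmin m hmB k (Finset.mem_sdiff.mp hkT').1
        have hkp : x k ≤ x p := hBpmax p hpB k hkT'
        by_cases hxe : x p = x m
        · refine ⟨by simp [hxe], by simp [hxe], ?_⟩
          simp only [if_pos hxe]
          have : x k = x m := le_antisymm (hxe ▸ hkp) hmk
          rw [this]; ring
        · have hlt : x m < x p := lt_of_le_of_ne (hmk.trans hkp) (Ne.symm hxe)
          have hd : (0:ℝ) < x p - x m := by linarith
          refine ⟨?_, ?_, ?_⟩
          · simp only [if_neg hxe]
            apply div_nonneg (by linarith) hd.le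
          · simp only [if_neg hxe]
            rw [div_le_one hd]; linarith
          · simp only [if_neg hxe]
            field_simp
            ring
      · intro h
        have : m ∈ T := (Finset.mem_inter.mp h).1
        rw [hT] at this
        exact (Finset.mem_sdiff.mp (Finset.mem_sdiff.mp this).1).2 hmB
      · intro h
        have : p ∈ T := (Finset.mem_inter.mp h).1
        rw [hT] at this
        exact (Finset.mem_sdiff.mp this).2 hpB
  -- cardinalities
  have hbN : b ≤ N.card := by omega
  have hcardNB : (N \ Bminus).card = N.card - b := by
    rw [Finset.card_sdiff_of_subset hBm, hBmcard]
  have hcardT : T.card = N.card - 2 * b := by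
    rw [hT, Finset.card_sdiff_of_subset hBp, hcardNB, hBpcard]; omega
  have hden : ((N.card : ℝ) - 2 * b + 1) = ((T.card : ℝ) + 1) := by
    rw [hcardT]; push_cast [Nat.cast_sub (by omega : 2 * b ≤ N.card)]; ring
  have hdpos : (0:ℝ) < (N.card : ℝ) - 2 * b + 1 := by
    rw [hden]; positivity
  set c : ℝ := 1 / ((N.card : ℝ) - 2 * b + 1) with hc
  have hcpos : 0 < c := by positivity
  set S1 : ℝ := ∑ k ∈ F, lam k with hS1
  set S2 : ℝ := ∑ k ∈ F, (1 - lam k) with hS2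
  have hS1n : 0 ≤ S1 := Finset.sum_nonneg fun k hk => (hlam k hk).1
  have hS2n : 0 ≤ S2 := Finset.sum_nonneg fun k hk => by
    have := (hlam k hk).2.1; linarith
  refine ⟨fun i => c * ((if i = j then 1 else 0) + (if i ∈ T ∩ G then 1 else 0)
      + (if i = m then S1 else 0) + (if i = p then S2 else 0)), ?_, ?_, ?_, ?_, ?_⟩
  · intro i _
    apply mul_nonneg hcpos.le
    split_ifs <;> linarith
  · intro i _ hi
    have h1 : i ≠ j := by simp at hi; tauto
    have h2 : i ∉ T ∩ G := by
      simp only [Finset.mem_inter]; intro h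
      simp at hi; exact hi.2 h.2
    have h3 : i ≠ m := by rintro rfl; exact hi hmG
    have h4 : i ≠ p := by rintro rfl; exact hi hpG
    simp [h1, h2, h3, h4]
  · -- sum = 1
    have hjm : (if j = m then S1 else 0) = 0 := by
      rcases F.eq_empty_or_nonempty with h | h
      · have : S1 = 0 := by simp [hS1, h]
        simp [this]
      · rw [if_neg (Ne.symm (hne h).1)]
    have hjp : (if j = p then S2 else 0) = 0 := by
      rcases F.eq_empty_or_nonempty with h | h
      · have : S2 = 0 := by simp [hS2, h]
        simp [this]
      · rw [if_neg (Ne.symm (hne h).2)]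
    have hTG : T ∩ G ⊆ insert j N := fun i hi =>
      Finset.mem_insert_of_mem (hTsubN (Finset.mem_inter.mp hi).1)
    rw [← Finset.mul_sum]
    have hsum : ∑ i ∈ insert j N, ((if i = j then 1 else 0) + (if i ∈ T ∩ G then 1 else 0)
        + (if i = m then S1 else 0) + (if i = p then S2 else 0))
        = 1 + (T ∩ G).card + S1 + S2 := by
      rw [Finset.sum_add_distrib, Finset.sum_add_distrib, Finset.sum_add_distrib]
      rw [Finset.sum_ite_eq' (insert j N) j (fun _ => (1:ℝ)),
          Finset.sum_ite_eq' (insert j N) m (fun _ => S1),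
          Finset.sum_ite_eq' (insert j N) p (fun _ => S2)]
      rw [if_pos (Finset.mem_insert_self j N), if_pos hmN, if_pos hpN]
      congr 1
      congr 1
      congr 1
      rw [Finset.sum_ite_mem, Finset.inter_eq_right.mpr hTG]
      simp
    rw [hsum]
    have hcards : ((T ∩ G).card : ℝ) + S1 + S2 = (T.card : ℝ) := by
      have h1 : S1 + S2 = (F.card : ℝ) := by
        rw [hS1, hS2, ← Finset.sum_add_distrib]
        simp
      have hsplit : (T ∩ G).card + F.card = T.card :=
        Finset.card_inter_add_card_sdiff T G
      have h2 : ((T ∩ G).card : ℝ) + (F.card : ℝ) = (T.card : ℝ) := by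
        exact_mod_cast congrArg (Nat.cast : ℕ → ℝ) hsplit
      linarith
    rw [hc, hden]
    field_simp
    linarith [hcards]
  · -- y j
    have h2 : j ∉ T ∩ G := fun h => hj (hTsubN (Finset.mem_inter.mp h).1)
    have hjm : (if j = m then S1 else 0) = 0 := by
      rcases F.eq_empty_or_nonempty with h | h
      · have : S1 = 0 := by simp [hS1, h]
        simp [this]
      · rw [if_neg (Ne.symm (hne h).1)]
    have hjp : (if j = p then S2 else 0) = 0 := by
      rcases F.eq_empty_or_nonempty with h | h
      · have : S2 = 0 := by simp [hS2, h]
        simp [this]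
      · rw [if_neg (Ne.symm (hne h).2)]
    simp [h2, hjm, hjp]
  · -- main identity
    have hTG : T ∩ G ⊆ insert j N := fun i hi =>
      Finset.mem_insert_of_mem (hTsubN (Finset.mem_inter.mp hi).1)
    have hS : S1 * x m + S2 * x p = ∑ k ∈ F, x k := by
      rw [hS1, hS2, Finset.sum_mul, Finset.sum_mul, ← Finset.sum_add_distrib]
      exact Finset.sum_congr rfl fun k hk => (hlam k hk).2.2
    have hTsplit : (∑ i ∈ T ∩ G, x i) + (∑ i ∈ F, x i) = ∑ i ∈ T, x i := by
      rw [hF]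
      exact Finset.sum_inter_add_sum_sdiff T G x
    have hexp : ∑ i ∈ insert j N,
        (c * ((if i = j then 1 else 0) + (if i ∈ T ∩ G then 1 else 0)
          + (if i = m then S1 else 0) + (if i = p then S2 else 0))) * x i
        = c * (x j + (∑ i ∈ T ∩ G, x i) + S1 * x m + S2 * x p) := by
      simp only [mul_assoc]
      rw [← Finset.mul_sum]
      congr 1
      have hptw : ∀ i, ((if i = j then (1:ℝ) else 0) + (if i ∈ T ∩ G then 1 else 0)
          + (if i = m then S1 else 0) + (if i = p then S2 else 0)) * x i
          = (if i = j then x i else 0) + (if i ∈ T ∩ G then x i else 0)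
          + (if i = m then S1 * x m else 0) + (if i = p then S2 * x p else 0) := by
        intro i
        split_ifs with h1 h2 h3 h4 <;> first
          | (subst_vars; ring)
          | ring
      rw [Finset.sum_congr rfl fun i _ => hptw i]
      rw [Finset.sum_add_distrib, Finset.sum_add_distrib, Finset.sum_add_distrib]
      rw [Finset.sum_ite_eq' (insert j N) j x,
          Finset.sum_ite_eq' (insert j N) m (fun _ => S1 * x m),
          Finset.sum_ite_eq' (insert j N) p (fun _ => S2 * x p)]
      rw [if_pos (Finset.mem_insert_self j N), if_pos hmN, if_pos hpN]
      rw [Finset.sum_ite_mem, Finset.inter_eq_right.mpr hTG]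
    rw [hexp]
    congr 1
    linarith [hS, hTsplit]
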